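/- Let P be any finite group, let R be any commutative ring, let G = Sym(P) be the symmetric group on the underlying set of P, and regard P as a subgroup of G via the Cayley embedding i_P. Then for every n ≥ 0, every x ∈ H^n(G; R), every subgroup Q ≤ P, and every injective group homomorphism ψ : Q → P, one has ψ^*(i_P^*(x)) = Res^P_Q(i_P^*(x)) in H^n(Q; R). -/

import Mathlib

open CategoryTheory groupCohomology

noncomputable section

variable {k : Type} [CommRing k]

section AuxCombinatorics
open Finset

lemma hsgn_aux : ∀ e f : ℕ, e % 2 = f % 2 → (-1 : k) ^ e = (-1 : k) ^ f := by
  intro e f h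
  conv_lhs => rw [← Nat.div_add_mod e 2]
  conv_rhs => rw [← Nat.div_add_mod f 2]
  rw [h, pow_add, pow_add, pow_mul, pow_mul, neg_one_sq, one_pow, one_pow]

lemma sum_magic {M : Type} [AddCommGroup M] [Module k M] (m : ℕ)
    (A : ℕ → M) (C : ℕ → ℕ → M) (B : ℕ → M) (Dm : ℕ → ℕ → M) (Tm Φ : M)
    (hA0 : A 0 = Tm)
    (hAS : ∀ i ≤ m, A (i + 1) = B i)
    (hlow : ∀ i j, j < i → i ≤ m → C (i + 1) j = Dm i j)
    (hhigh : ∀ i j, i ≤ j → j ≤ m → C i (j + 1) = Dm i j)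
    (hdiag : ∀ i ≤ m, C (i + 1) i = C i i)
    (hlast : C (m + 1) (m + 1) = Φ) :
    (∑ i ∈ range (m + 2), (-1 : k) ^ i •
        (A i + ∑ j ∈ range (m + 2), (-1 : k) ^ (j + 1) • C i j))
      + ((∑ i ∈ range (m + 1), (-1 : k) ^ i • B i)
        + ∑ j ∈ range (m + 1), (-1 : k) ^ (j + 1) •
            (∑ i ∈ range (m + 1), (-1 : k) ^ i • Dm i j))
      + Φ = Tm := by
  have hs : ∀ (a b : ℕ) (c : ℕ) (x : M), a % 2 = b % 2 →
      (-1 : k) ^ a • x = (-1 : k) ^ b • x := by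
    intro a b _ x h; rw [hsgn_aux a b h]
  -- the A-part
  have eA : ∑ i ∈ range (m + 2), (-1 : k) ^ i • A i
      = Tm - ∑ i ∈ range (m + 1), (-1 : k) ^ i • B i := by
    rw [Finset.sum_range_succ']
    have h1 : ∑ i ∈ range (m + 1), (-1 : k) ^ (i + 1) • A (i + 1)
        = -∑ i ∈ range (m + 1), (-1 : k) ^ i • B i := by
      rw [← Finset.sum_neg_distrib]
      refine Finset.sum_congr rfl fun i hi => ?_
      rw [hAS i (by simpa using Nat.lt_succ_iff.mp (mem_range.mp hi)), pow_succ, mul_smul,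
        neg_one_smul, smul_neg]
    rw [h1, pow_zero, one_smul, hA0]
    abel
  -- the row decomposition of the double sum
  set t : ℕ → ℕ → M := fun i j => (-1 : k) ^ i • (-1 : k) ^ (j + 1) • C i j with ht
  have hrow0 : ∑ j ∈ range (m + 2), t 0 j
      = (∑ j ∈ range (m + 1), (-1 : k) ^ j • Dm 0 j) - C 0 0 := by
    rw [Finset.sum_range_succ']
    have h1 : ∑ j ∈ range (m + 1), t 0 (j + 1)
        = ∑ j ∈ range (m + 1), (-1 : k) ^ j • Dm 0 j := by
      refine Finset.sum_congr rfl fun j hj => ?_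
      simp only [ht, pow_zero, one_smul]
      rw [hhigh 0 j (Nat.zero_le _) (Nat.lt_succ_iff.mp (mem_range.mp hj))]
      exact hs _ _ 0 _ (by omega)
    have h2 : t 0 0 = -C 0 0 := by
      simp only [ht]; simp
    rw [h1, h2]; abel
  have hrowS : ∀ i ∈ range (m + 1), ∑ j ∈ range (m + 2), t (i + 1) j
      = (∑ j ∈ range i, (-1 : k) ^ (i + j) • Dm i j)
        + (C i i - C (i + 1) (i + 1))
        + ∑ j ∈ Ico (i + 1) (m + 1), (-1 : k) ^ (i + 1 + j) • Dm (i + 1) j := by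
    intro i hi
    have him : i ≤ m := Nat.lt_succ_iff.mp (mem_range.mp hi)
    rw [range_eq_Ico, ← Finset.sum_Ico_consecutive _ (Nat.zero_le (i + 1)) (by omega : i + 1 ≤ m + 2),
      ← range_eq_Ico, Finset.sum_range_succ]
    have hlowpart : ∑ j ∈ range i, t (i + 1) j = ∑ j ∈ range i, (-1 : k) ^ (i + j) • Dm i j := by
      refine Finset.sum_congr rfl fun j hj => ?_
      simp only [ht, smul_smul, ← pow_add]
      rw [hlow i j (mem_range.mp hj) him]
      exact hs _ _ 0 _ (by omega)
    have hd1 : t (i + 1) i = C i i := by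
      simp only [ht]
      rw [smul_smul, ← pow_add,
        show (-1 : k) ^ (i + 1 + (i + 1)) = 1 from (hsgn_aux _ 0 (by omega)).trans (pow_zero _),
        one_smul, hdiag i him]
    have hhighpart : ∑ j ∈ Ico (i + 1) (m + 2), t (i + 1) j
        = -C (i + 1) (i + 1) + ∑ j ∈ Ico (i + 1) (m + 1), (-1 : k) ^ (i + 1 + j) • Dm (i + 1) j := by
      rw [Finset.sum_Ico_eq_sum_range, Finset.sum_Ico_eq_sum_range]
      have e1 : m + 2 - (i + 1) = (m + 1 - (i + 1)) + 1 := by omega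
      rw [e1, Finset.sum_range_succ']
      have h2 : t (i + 1) (i + 1 + 0) = -C (i + 1) (i + 1) := by
        simp only [ht, Nat.add_zero, smul_smul, ← pow_add]
        rw [show (-1 : k) ^ (i + 1 + (i + 1 + 1)) = (-1 : k) ^ 1 from hsgn_aux _ 1 (by omega)]
        simp
      rw [h2]
      have h3 : ∑ l ∈ range (m + 1 - (i + 1)), t (i + 1) (i + 1 + (l + 1))
          = ∑ l ∈ range (m + 1 - (i + 1)), (-1 : k) ^ (i + 1 + (i + 1 + l)) • Dm (i + 1) (i + 1 + l) := by
        refine Finset.sum_congr rfl fun l hl => ?_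
        have hl' : l < m + 1 - (i + 1) := mem_range.mp hl
        simp only [ht, smul_smul, ← pow_add]
        rw [show i + 1 + (l + 1) = (i + 1 + l) + 1 from by omega,
          hhigh (i + 1) (i + 1 + l) (by omega) (by omega)]
        exact hs _ _ 0 _ (by omega)
      rw [h3]
      abel
    rw [hlowpart, hd1, hhighpart]
    abel
  -- assemble the double sum
  have eDS : ∑ i ∈ range (m + 2), (-1 : k) ^ i •
        (∑ j ∈ range (m + 2), (-1 : k) ^ (j + 1) • C i j)
      = (∑ i ∈ range (m + 1), ∑ j ∈ range (m + 1), (-1 : k) ^ (i + j) • Dm i j) - Φ := by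
    have e0 : ∑ i ∈ range (m + 2), (-1 : k) ^ i •
          (∑ j ∈ range (m + 2), (-1 : k) ^ (j + 1) • C i j)
        = ∑ i ∈ range (m + 2), ∑ j ∈ range (m + 2), t i j := by
      refine Finset.sum_congr rfl fun i _ => ?_
      rw [Finset.smul_sum]
    rw [e0, Finset.sum_range_succ']
    rw [Finset.sum_congr rfl hrowS, hrow0]
    simp only [Finset.sum_add_distrib]
    rw [Finset.sum_range_sub' (fun i => C i i), hlast]
    -- now handle LOW + HIGH = Full
    have eFull : ∑ i ∈ range (m + 1), ∑ j ∈ range (m + 1), (-1 : k) ^ (i + j) • Dm i j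
        = (∑ i ∈ range (m + 1), ∑ j ∈ range i, (-1 : k) ^ (i + j) • Dm i j)
          + ∑ i ∈ range (m + 1), ∑ j ∈ Ico i (m + 1), (-1 : k) ^ (i + j) • Dm i j := by
      rw [← Finset.sum_add_distrib]
      refine Finset.sum_congr rfl fun i hi => ?_
      rw [range_eq_Ico, ← Finset.sum_Ico_consecutive _ (Nat.zero_le i)
        (by have := mem_range.mp hi; omega : i ≤ m + 1), ← range_eq_Ico]
    have eHigh : ∑ i ∈ range (m + 1), ∑ j ∈ Ico i (m + 1), (-1 : k) ^ (i + j) • Dm i j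
        = (∑ j ∈ range (m + 1), (-1 : k) ^ j • Dm 0 j)
          + ∑ i ∈ range (m + 1), ∑ j ∈ Ico (i + 1) (m + 1), (-1 : k) ^ (i + 1 + j) • Dm (i + 1) j := by
      rw [Finset.sum_range_succ']
      rw [Finset.sum_range_succ (fun i => ∑ j ∈ Ico (i + 1) (m + 1), (-1 : k) ^ (i + 1 + j) • Dm (i + 1) j)]
      rw [Finset.Ico_self, Finset.sum_empty, add_zero]
      have : ∑ j ∈ Ico 0 (m + 1), (-1 : k) ^ (0 + j) • Dm 0 j
          = ∑ j ∈ range (m + 1), (-1 : k) ^ j • Dm 0 j := by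
        rw [← range_eq_Ico]
        exact Finset.sum_congr rfl fun j _ => by rw [Nat.zero_add]
      rw [this]
      abel
    rw [eFull, eHigh]
    abel
  -- the DD part
  have eDD : ∑ j ∈ range (m + 1), (-1 : k) ^ (j + 1) •
        (∑ i ∈ range (m + 1), (-1 : k) ^ i • Dm i j)
      = -∑ i ∈ range (m + 1), ∑ j ∈ range (m + 1), (-1 : k) ^ (i + j) • Dm i j := by
    have hterm : ∀ j ∈ range (m + 1), (-1 : k) ^ (j + 1) •
          (∑ i ∈ range (m + 1), (-1 : k) ^ i • Dm i j)
        = ∑ i ∈ range (m + 1), -((-1 : k) ^ (i + j) • Dm i j) := by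
      intro j _
      rw [Finset.smul_sum]
      refine Finset.sum_congr rfl fun i _ => ?_
      rw [smul_smul, ← pow_add,
        show ((-1 : k) ^ (j + 1 + i)) = -(-1 : k) ^ (i + j) from by
          rw [hsgn_aux (j + 1 + i) (i + j + 1) (by omega), pow_succ]; ring,
        neg_smul]
    rw [Finset.sum_congr rfl hterm, Finset.sum_comm]
    simp only [Finset.sum_neg_distrib]
  -- final assembly
  simp only [smul_add, Finset.sum_add_distrib]
  rw [eA, eDS, eDD]
  abel


open Finset

section NatOps

variable {G : Type} [Group G]

def insN (σ : G) (i : ℕ) (e : ℕ → G) : ℕ → G := fun l =>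
  if l < i then e l else if l = i then σ⁻¹ else σ * e (l - 1) * σ⁻¹

def conN (j : ℕ) (e : ℕ → G) : ℕ → G := fun l =>
  if l < j then e l else if l = j then e l * e (l + 1) else e (l + 1)

def tailN (e : ℕ → G) : ℕ → G := fun l => e (l + 1)

lemma tailN_insN_zero (σ : G) (e : ℕ → G) :
    tailN (insN σ 0 e) = fun l => σ * e l * σ⁻¹ := by
  funext l
  simp only [tailN, insN, Nat.add_sub_cancel]
  split_ifs <;> first | rfl | omega | contradiction

lemma tailN_insN_succ (σ : G) (i : ℕ) (e : ℕ → G) :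
    tailN (insN σ (i + 1) e) = insN σ i (tailN e) := by
  funext l
  simp only [tailN, insN, Nat.add_sub_cancel]
  split_ifs with h1 h2 h3 h4 h5 h6 <;>
    first | rfl | omega | contradiction | (exact congrArg e (by omega)) |
      (exact congrArg (fun x => σ * x * σ⁻¹) (congrArg e (by omega)))

lemma conN_insN_low (σ : G) (i j : ℕ) (h : j < i) (e : ℕ → G) :
    conN j (insN σ (i + 1) e) = insN σ i (conN j e) := by
  funext l
  simp only [conN, insN, Nat.add_sub_cancel]
  split_ifs <;>
    first | rfl | omega | contradiction | (exact congrArg e (by omega)) |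
      (exact congrArg (fun x => σ * x * σ⁻¹) (congrArg e (by omega))) |
      (solve | simp [mul_assoc, inv_mul_cancel_left]) |
      (rw [show l - 1 + 1 = l from by omega]; simp [mul_assoc, inv_mul_cancel_left])

lemma conN_insN_high (σ : G) (i j : ℕ) (h : i ≤ j) (e : ℕ → G) :
    conN (j + 1) (insN σ i e) = insN σ i (conN j e) := by
  funext l
  simp only [conN, insN, Nat.add_sub_cancel]
  split_ifs <;>
    first | rfl | omega | contradiction | (exact congrArg e (by omega)) |
      (exact congrArg (fun x => σ * x * σ⁻¹) (congrArg e (by omega))) |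
      (solve | simp [mul_assoc, inv_mul_cancel_left]) |
      (rw [show l - 1 + 1 = l from by omega]; simp [mul_assoc, inv_mul_cancel_left])

lemma conN_insN_diag (σ : G) (i : ℕ) (e : ℕ → G) :
    conN i (insN σ (i + 1) e) = conN i (insN σ i e) := by
  funext l
  simp only [conN, insN, Nat.add_sub_cancel]
  split_ifs <;>
    first | rfl | omega | contradiction | (exact congrArg e (by omega)) |
      (exact congrArg (fun x => σ * x * σ⁻¹) (congrArg e (by omega))) |
      (solve | simp [mul_assoc, inv_mul_cancel_left]) |
      (rw [show l - 1 + 1 = l from by omega]; simp [mul_assoc, inv_mul_cancel_left])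

lemma conN_insN_last (σ : G) (m : ℕ) (e : ℕ → G) :
    ∀ l < m + 1, conN (m + 1) (insN σ (m + 1) e) l = e l := by
  intro l hl
  simp only [conN, insN]
  split_ifs <;> first | rfl | omega

end NatOps


section Bridge

variable {k : Type} [CommRing k] {G : Type} [Group G]

def extN {mu : ℕ} (g : Fin mu → G) : ℕ → G := fun l => if h : l < mu then g ⟨l, h⟩ else 1

lemma extN_apply {mu : ℕ} (g : Fin mu → G) (l : Fin mu) : extN g ↑l = g l := by
  simp [extN, l.isLt]

lemma res_extN {mu : ℕ} (g : Fin mu → G) : (fun l : Fin mu => extN g ↑l) = g :=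
  funext fun l => extN_apply g l

lemma extN_res_lt {mu : ℕ} (u : ℕ → G) : ∀ t < mu, extN (fun l : Fin mu => u ↑l) t = u t := by
  intro t ht
  simp [extN, ht]

lemma contract_res (mu : ℕ) (e : ℕ → G) (j : Fin (mu + 1)) :
    Fin.contractNth j (· * ·) (fun l : Fin (mu + 1) => e ↑l) = fun l : Fin mu => conN ↑j e ↑l := by
  funext l
  simp only [Fin.contractNth, conN, Fin.coe_castSucc, Fin.val_succ]

lemma insN_congr (σ : G) {mu : ℕ} {u v : ℕ → G} (huv : ∀ t < mu, u t = v t)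
    {i : ℕ} (hi : i ≤ mu) (l : Fin (mu + 1)) : insN σ i u ↑l = insN σ i v ↑l := by
  have hl := l.isLt
  simp only [insN]
  split_ifs with h1 h2
  · exact huv _ (by omega)
  · rfl
  · rw [huv _ (by omega)]

def sMapL (σ : G) (m : ℕ) : ((Fin (m + 1) → G) → k) →ₗ[k] ((Fin m → G) → k) where
  toFun φ g := ∑ i ∈ range (m + 1), (-1 : k) ^ i • φ (fun l : Fin (m + 1) => insN σ i (extN g) ↑l)
  map_add' φ ψ := by
    funext g
    simp [smul_add, mul_add, Finset.sum_add_distrib]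
  map_smul' r φ := by
    funext g
    simp only [Pi.smul_apply, RingHom.id_apply, smul_eq_mul, Finset.mul_sum, mul_left_comm]

lemma key (σ : G) (m : ℕ) (φ : (Fin (m + 1) → G) → k) (e : ℕ → G) :
    (∑ i ∈ range (m + 2), (-1 : k) ^ i •
        (φ (fun l : Fin (m + 1) => tailN (insN σ i e) ↑l)
          + ∑ j ∈ range (m + 2), (-1 : k) ^ (j + 1) •
              φ (fun l : Fin (m + 1) => conN j (insN σ i e) ↑l)))
      + ((∑ i ∈ range (m + 1), (-1 : k) ^ i • φ (fun l : Fin (m + 1) => insN σ i (tailN e) ↑l))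
        + ∑ j ∈ range (m + 1), (-1 : k) ^ (j + 1) •
            (∑ i ∈ range (m + 1), (-1 : k) ^ i •
              φ (fun l : Fin (m + 1) => insN σ i (conN j e) ↑l)))
      + φ (fun l : Fin (m + 1) => e ↑l)
      = φ (fun l : Fin (m + 1) => σ * e ↑l * σ⁻¹) :=
  sum_magic m
    (fun i => φ (fun l : Fin (m + 1) => tailN (insN σ i e) ↑l))
    (fun i j => φ (fun l : Fin (m + 1) => conN j (insN σ i e) ↑l))
    (fun i => φ (fun l : Fin (m + 1) => insN σ i (tailN e) ↑l))
    (fun i j => φ (fun l : Fin (m + 1) => insN σ i (conN j e) ↑l))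
    (φ (fun l : Fin (m + 1) => σ * e ↑l * σ⁻¹))
    (φ (fun l : Fin (m + 1) => e ↑l))
    (congrArg φ (by rw [tailN_insN_zero]))
    (fun i _ => congrArg φ (by rw [tailN_insN_succ]))
    (fun i j hj _ => congrArg φ (by rw [conN_insN_low σ i j hj]))
    (fun i j hij _ => congrArg φ (by rw [conN_insN_high σ i j hij]))
    (fun i _ => congrArg φ (by rw [conN_insN_diag]))
    (congrArg φ (funext fun l => conN_insN_last σ m e ↑l l.isLt))

end Bridge


end AuxCombinatorics


/-- Precomposition with a group homomorphism `f : H →* G` on inhomogeneous cochains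
with trivial coefficients. -/
def trivialCochainsMap {G H : Type} [Group G] [Group H] (f : H →* G) :
    inhomogeneousCochains (Rep.trivial k G k) ⟶ inhomogeneousCochains (Rep.trivial k H k) where
  f n := ModuleCat.ofHom
    { toFun := fun φ (v : Fin n → H) => φ (fun i => f (v i))
      map_add' := fun _ _ => rfl
      map_smul' := fun _ _ => rfl }
  comm' i j hij := by
    obtain rfl : i + 1 = j := hij
    ext φ g
    simp only [ModuleCat.hom_comp, LinearMap.comp_apply, CochainComplex.of_d]
    show (inhomogeneousCochains.d (Rep.trivial k H k) i).hom (fun v => φ fun l => f (v l)) g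
      = (inhomogeneousCochains.d (Rep.trivial k G k) i).hom φ (fun l => f (g l))
    simp only [inhomogeneousCochains.d_hom_apply, Rep.trivial_ρ]
    congr 1
    refine Finset.sum_congr rfl fun j _ => ?_
    have h : (fun l => f (Fin.contractNth j (· * ·) g l))
        = Fin.contractNth j (· * ·) (fun l => f (g l)) := by
      funext l
      unfold Fin.contractNth
      split_ifs <;> simp [map_mul]
    rw [h]

/-- The map `f^* : Hⁿ(G; k) → Hⁿ(H; k)` on group cohomology with (trivial) coefficients
in `k` induced by a group homomorphism `f : H →* G`. -/
def cohomologyRes {G H : Type} [Group G] [Group H] (f : H →* G) (n : ℕ) :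
    groupCohomology (Rep.trivial k G k) n ⟶ groupCohomology (Rep.trivial k H k) n :=
  HomologicalComplex.homologyMap (trivialCochainsMap f) n



section AuxHomotopy
open Finset


variable {G : Type} [Group G]

def dK (mu : ℕ) : ((Fin mu → G) → k) →ₗ[k] ((Fin (mu + 1) → G) → k) :=
  (inhomogeneousCochains.d (Rep.trivial k G k) mu).hom

lemma dfun_eval (mu : ℕ) (φ : (Fin mu → G) → k) (e : ℕ → G) :
    (inhomogeneousCochains.d (Rep.trivial k G k) mu).hom φ (fun l : Fin (mu + 1) => e ↑l)
      = φ (fun l : Fin mu => tailN e ↑l)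
        + ∑ j ∈ range (mu + 1), (-1 : k) ^ (j + 1) • φ (fun l : Fin mu => conN j e ↑l) := by
  simp only [inhomogeneousCochains.d_hom_apply, Rep.trivial_ρ, Module.End.one_apply]
  congr 1
  simp only [contract_res]
  exact Fin.sum_univ_eq_sum_range
    (fun j => (-1 : k) ^ (j + 1) • φ (fun l : Fin mu => conN j e ↑l)) (mu + 1)

lemma dK_eval (mu : ℕ) (φ : (Fin mu → G) → k) (e : ℕ → G) :
    dK (G := G) mu φ (fun l : Fin (mu + 1) => e ↑l)
      = φ (fun l : Fin mu => tailN e ↑l)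
        + ∑ j ∈ range (mu + 1), (-1 : k) ^ (j + 1) • φ (fun l : Fin mu => conN j e ↑l) :=
  dfun_eval mu φ e

lemma sMapL_apply (σ : G) (m : ℕ) (φ : (Fin (m + 1) → G) → k) (g : Fin m → G) :
    sMapL σ m φ g
      = ∑ i ∈ range (m + 1), (-1 : k) ^ i • φ (fun l : Fin (m + 1) => insN σ i (extN g) ↑l) :=
  rfl

lemma hmain_zero (σ : G) (φ : (Fin 0 → G) → k) (g : Fin 0 → G) :
    φ (fun l => σ * g l * σ⁻¹) = sMapL (k := k) σ 0 (dK (G := G) 0 φ) g + φ g := by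
  have h0 : ∀ a b : Fin 0 → G, a = b := fun a b => funext fun l => l.elim0
  have hs : sMapL (k := k) σ 0 (dK (G := G) 0 φ) g = 0 := by
    rw [sMapL_apply, Finset.sum_range_one, pow_zero, one_smul,
      dK_eval 0 φ (insN σ 0 (extN g)), Finset.sum_range_one, pow_one,
      h0 (fun l : Fin 0 => conN 0 (insN σ 0 (extN g)) ↑l)
        (fun l : Fin 0 => tailN (insN σ 0 (extN g)) ↑l)]
    simp
  rw [hs, zero_add]
  exact congrArg φ (h0 _ _)

lemma hmain_succ (σ : G) (m : ℕ) (φ : (Fin (m + 1) → G) → k) (g : Fin (m + 1) → G) :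
    φ (fun l => σ * g l * σ⁻¹)
      = sMapL (k := k) σ (m + 1) (dK (G := G) (m + 1) φ) g
        + dK (G := G) m (sMapL (k := k) σ m φ) g + φ g := by
  have p1 : sMapL (k := k) σ (m + 1) (dK (G := G) (m + 1) φ) g
      = ∑ i ∈ range (m + 2), (-1 : k) ^ i •
          (φ (fun l : Fin (m + 1) => tailN (insN σ i (extN g)) ↑l)
            + ∑ j ∈ range (m + 2), (-1 : k) ^ (j + 1) •
                φ (fun l : Fin (m + 1) => conN j (insN σ i (extN g)) ↑l)) := by
    rw [sMapL_apply]
    exact Finset.sum_congr rfl fun i _ => by rw [dK_eval]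
  have p2 : dK (G := G) m (sMapL (k := k) σ m φ) g
      = (∑ i ∈ range (m + 1), (-1 : k) ^ i •
            φ (fun l : Fin (m + 1) => insN σ i (tailN (extN g)) ↑l))
        + ∑ j ∈ range (m + 1), (-1 : k) ^ (j + 1) •
            (∑ i ∈ range (m + 1), (-1 : k) ^ i •
              φ (fun l : Fin (m + 1) => insN σ i (conN j (extN g)) ↑l)) := by
    conv_lhs => rw [← res_extN g]
    rw [dK_eval m (sMapL (k := k) σ m φ) (extN g)]
    congr 1
    · rw [sMapL_apply]
      refine Finset.sum_congr rfl fun i hi => ?_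
      congr 1
      exact congrArg φ (funext fun l =>
        insN_congr σ (extN_res_lt _) (Nat.lt_succ_iff.mp (mem_range.mp hi)) l)
    · refine Finset.sum_congr rfl fun j hj => ?_
      congr 1
      rw [sMapL_apply]
      refine Finset.sum_congr rfl fun i hi => ?_
      congr 1
      exact congrArg φ (funext fun l =>
        insN_congr σ (extN_res_lt _) (Nat.lt_succ_iff.mp (mem_range.mp hi)) l)
  have hconj : φ (fun l : Fin (m + 1) => σ * g l * σ⁻¹)
      = φ (fun l : Fin (m + 1) => σ * extN g ↑l * σ⁻¹) :=
    congrArg φ (funext fun l => by rw [extN_apply])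
  have hg : φ g = φ (fun l : Fin (m + 1) => extN g ↑l) := congrArg φ (res_extN g).symm
  rw [p1, p2]
  linear_combination hconj - (key σ m φ (extN g)) - hg

def homs (σ : G) (i j : ℕ) :
    (inhomogeneousCochains (Rep.trivial k G k)).X i ⟶ (inhomogeneousCochains (Rep.trivial k G k)).X j :=
  if h : i = j + 1 then
    eqToHom (congrArg (inhomogeneousCochains (Rep.trivial k G k)).X h) ≫ ModuleCat.ofHom (sMapL σ j)
  else 0

lemma homs_succ (σ : G) (j : ℕ) :
    homs (k := k) σ (j + 1) j = ModuleCat.ofHom (sMapL σ j) := by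
  simp [homs]

def conjHomotopy (σ : G) :
    Homotopy (trivialCochainsMap (k := k) (MulAut.conj σ).toMonoidHom)
      (𝟙 (inhomogeneousCochains (Rep.trivial k G k))) where
  hom := homs σ
  zero i j hij := dif_neg (fun h => hij h.symm)
  comm i := by
    cases i with
    | zero =>
      rw [Homotopy.dNext_cochainComplex, Homotopy.prevD_zero_cochainComplex, homs_succ,
        inhomogeneousCochains.d_def, add_zero]
      refine ModuleCat.hom_ext (LinearMap.ext fun φ => funext fun g => ?_)
      exact hmain_zero (k := k) σ φ g
    | succ m =>
      rw [Homotopy.dNext_cochainComplex, Homotopy.prevD_succ_cochainComplex, homs_succ, homs_succ,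
        inhomogeneousCochains.d_def, inhomogeneousCochains.d_def]
      refine ModuleCat.hom_ext (LinearMap.ext fun φ => funext fun g => ?_)
      exact hmain_succ (k := k) σ m φ g


lemma cohomologyRes_conj_apply {G : Type} [Group G] (σ : G) (n : ℕ)
    (y : groupCohomology (Rep.trivial k G k) n) :
    cohomologyRes (k := k) (MulAut.conj σ).toMonoidHom n y = y := by
  show (HomologicalComplex.homologyMap (trivialCochainsMap (k := k) (MulAut.conj σ).toMonoidHom) n) y = y
  rw [(conjHomotopy (k := k) σ).homologyMap_eq n, HomologicalComplex.homologyMap_id]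
  rfl

lemma trivialCochainsMap_comp {G H K : Type} [Group G] [Group H] [Group K]
    (f : H →* G) (h : K →* H) :
    (trivialCochainsMap (k := k) (f.comp h)) = trivialCochainsMap f ≫ trivialCochainsMap h := by
  ext n φ g
  rfl

lemma cohomologyRes_comp {G H K : Type} [Group G] [Group H] [Group K]
    (f : H →* G) (h : K →* H) (n : ℕ) (x : groupCohomology (Rep.trivial k G k) n) :
    cohomologyRes h n (cohomologyRes f n x) = cohomologyRes (f.comp h) n x := by
  simp only [cohomologyRes, trivialCochainsMap_comp, HomologicalComplex.homologyMap_comp]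
  rfl

-- the conjugating permutation
lemma exists_conj {P Q : Type} [Group P] [Group Q] [Finite P] (f g : Q →* P)
    (hf : Function.Injective f) (hg : Function.Injective g) :
    ∃ σ : Equiv.Perm P, ∀ q x, σ (f q * x) = g q * σ x := by
  have hQ : Finite Q := Finite.of_injective f hf
  classical
  -- setoid for a hom
  let S : (Q →* P) → Setoid P := fun f =>
    ⟨fun x y => ∃ q, f q * x = y, by
      constructor
      · exact fun x => ⟨1, by simp⟩
      · rintro x y ⟨q, rfl⟩; exact ⟨q⁻¹, by simp [mul_assoc]⟩
      · rintro x y z ⟨q, rfl⟩ ⟨q', rfl⟩; exact ⟨q' * q, by simp [mul_assoc]⟩⟩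
  have hE : ∀ (f : Q →* P), Function.Injective f →
      Function.Bijective (fun p : Q × Quotient (S f) => f p.1 * p.2.out) := by
    intro f hf
    constructor
    · rintro ⟨q, c⟩ ⟨q', c'⟩ h
      simp only at h
      have hc : c = c' := by
        rw [← Quotient.out_equiv_out]
        exact ⟨q'⁻¹ * q, by rw [map_mul, map_inv, mul_assoc, h, inv_mul_cancel_left]⟩
      subst hc
      have : f q = f q' := mul_right_cancel h
      exact Prod.ext (hf this) rfl
    · intro x
      obtain ⟨q, hq⟩ := (Quotient.mk_out (s := S f) x)
      exact ⟨⟨q, Quotient.mk (S f) x⟩, hq⟩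
  let Ef : Q × Quotient (S f) ≃ P := Equiv.ofBijective _ (hE f hf)
  let Eg : Q × Quotient (S g) ≃ P := Equiv.ofBijective _ (hE g hg)
  have hcard : Nat.card (Quotient (S f)) = Nat.card (Quotient (S g)) := by
    have h1 : Nat.card Q * Nat.card (Quotient (S f)) = Nat.card P := by
      rw [← Nat.card_prod]; exact Nat.card_congr Ef
    have h2 : Nat.card Q * Nat.card (Quotient (S g)) = Nat.card P := by
      rw [← Nat.card_prod]; exact Nat.card_congr Eg
    have hQ0 : Nat.card Q ≠ 0 := Nat.card_ne_zero.2 ⟨⟨1⟩, hQ⟩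
    exact Nat.eq_of_mul_eq_mul_left (Nat.pos_of_ne_zero hQ0) (h1.trans h2.symm)
  obtain ⟨θ⟩ : Nonempty (Quotient (S f) ≃ Quotient (S g)) := Finite.card_eq.mp hcard
  refine ⟨Ef.symm.trans ((Equiv.prodCongr (Equiv.refl Q) θ).trans Eg), fun q x => ?_⟩
  obtain ⟨⟨a, c⟩, rfl⟩ := Ef.surjective x
  have h1 : f q * Ef (a, c) = Ef (q * a, c) := by
    simp only [Ef, Equiv.ofBijective_apply, map_mul, mul_assoc]
  simp only [h1, Equiv.trans_apply, Equiv.symm_apply_apply, Equiv.prodCongr_apply,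
    Equiv.coe_refl, Prod.map, id_eq]
  simp only [Eg, Equiv.ofBijective_apply, map_mul, mul_assoc]


end AuxHomotopy

/-- **Theorem 3 of Leary–Schuster–Yagita** (arbitrary coefficient ring).
Let `P` be a finite group, `R` a commutative ring, `G = Sym(P)`, with `P ≤ G`
via the Cayley embedding `i_P`.  For every `x ∈ Hⁿ(G; R)`, every subgroup
`Q ≤ P`, and every injective homomorphism `ψ : Q → P`,
`ψ^*(i_P^*(x)) = Res^P_Q(i_P^*(x))`. -/
theorem stmt_3 (R : Type) [CommRing R] (P : Type) [Group P] [Finite P] (n : ℕ)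
    (x : groupCohomology (Rep.trivial R (Equiv.Perm P) R) n)
    (Q : Subgroup P) (ψ : Q →* P) (hψ : Function.Injective ψ) :
    cohomologyRes ψ n (cohomologyRes (MulAction.toPermHom P P) n x)
      = cohomologyRes Q.subtype n (cohomologyRes (MulAction.toPermHom P P) n x) := by
  obtain ⟨σ, hσ⟩ := exists_conj ψ Q.subtype hψ Q.subtype_injective
  have key : (MulAut.conj σ).toMonoidHom.comp ((MulAction.toPermHom P P).comp ψ)
      = (MulAction.toPermHom P P).comp Q.subtype := by
    ext q y
    simp only [MonoidHom.comp_apply, MulAut.conj, MulEquiv.toMonoidHom_eq_coe]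
    show (σ * (MulAction.toPermHom P P) (ψ q) * σ⁻¹) y = (MulAction.toPermHom P P) q y
    simp only [Equiv.Perm.mul_apply, MulAction.toPermHom_apply, MulAction.toPerm_apply,
      smul_eq_mul]
    rw [hσ]
    simp
  calc cohomologyRes ψ n (cohomologyRes (MulAction.toPermHom P P) n x)
      = cohomologyRes ((MulAction.toPermHom P P).comp ψ) n x := cohomologyRes_comp _ _ _ _
    _ = cohomologyRes ((MulAut.conj σ).toMonoidHom.comp ((MulAction.toPermHom P P).comp ψ)) n x := by
        rw [← cohomologyRes_comp ((MulAut.conj σ).toMonoidHom) ((MulAction.toPermHom P P).comp ψ) n x,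
          cohomologyRes_conj_apply]
    _ = cohomologyRes ((MulAction.toPermHom P P).comp Q.subtype) n x := by rw [key]
    _ = cohomologyRes Q.subtype n (cohomologyRes (MulAction.toPermHom P P) n x) :=
        (cohomologyRes_comp _ _ _ _).symm
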